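/- Let v be a vector in ℝ^m with m > 1. Then there exists a subset A ⊆ {1, …, m} with comparable coordinates, i.e. |v(i)| ≤ 2|v(j)| for all i, j ∈ A, and with big energy: ‖v|_A‖₂ ≥ ‖v‖₂ / (2.5 √(log₂ m)). -/

import Mathlib

/-- The Euclidean (ℓ2) norm of a finitely-indexed real vector. -/
noncomputable def l2 {ι : Type*} [Fintype ι] (v : ι → ℝ) : ℝ :=
  Real.sqrt (∑ i, (v i) ^ 2)

/-- The restriction of a vector to a set of coordinates (zero elsewhere). -/
def restr {m : ℕ} (A : Finset (Fin m)) (v : Fin m → ℝ) : Fin m → ℝ :=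
  fun i => if i ∈ A then v i else 0

/-- **Regularization.** For `v ∈ ℝ^m`, `m > 1`, there is a subset `A`
with comparable coordinates (`|v i| ≤ 2 |v j|` for `i, j ∈ A`) carrying big energy:
`‖v|_A‖₂ ≥ ‖v‖₂ / (2.5 √(log₂ m))`. -/
theorem stmt1 (m : ℕ) (hm : 1 < m) (v : Fin m → ℝ) :
    ∃ A : Finset (Fin m),
      (∀ i ∈ A, ∀ j ∈ A, |v i| ≤ 2 * |v j|) ∧
      l2 v / (2.5 * Real.sqrt (Real.logb 2 m)) ≤ l2 (restr A v) := by
  classical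
  set L : ℝ := Real.logb 2 m with hLdef
  have hL1 : (1 : ℝ) ≤ L := by
    rw [hLdef, show (1:ℝ) = Real.logb 2 2 by simp]
    exact Real.logb_le_logb_of_le one_lt_two (by norm_num) (by exact_mod_cast hm)
  by_cases hv : ∀ i, v i = 0
  · refine ⟨∅, by simp, ?_⟩
    have h1 : l2 v = 0 := by simp [l2, hv]
    rw [h1, zero_div]
    exact Real.sqrt_nonneg _
  push_neg at hv
  obtain ⟨i₀, hi₀⟩ := hv
  set S : ℝ := ∑ i, (v i) ^ 2 with hSdef
  have hSnn : 0 ≤ S := Finset.sum_nonneg fun i _ => sq_nonneg _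
  have hne : (Finset.univ : Finset (Fin m)).Nonempty := ⟨i₀, Finset.mem_univ _⟩
  set M : ℝ := Finset.univ.sup' hne (fun i => |v i|) with hMdef
  have hMle : ∀ i, |v i| ≤ M := by
    intro i; rw [hMdef]; exact Finset.le_sup' (f := fun j => |v j|) (Finset.mem_univ i)
  have hMpos : 0 < M := lt_of_lt_of_le (abs_pos.mpr hi₀) (hMle i₀)
  have hM2S : M ^ 2 ≤ S := by
    obtain ⟨iM, -, hiM⟩ := Finset.exists_mem_eq_sup' hne (fun i => |v i|)
    rw [hMdef, hiM, sq_abs]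
    exact Finset.single_le_sum (fun i _ => sq_nonneg (v i)) (Finset.mem_univ iM)
  set K : ℕ := Nat.clog 2 m with hKdef
  have hK1 : 0 < K := Nat.clog_pos one_lt_two hm
  have hmK : (m : ℝ) ≤ 2 ^ K := by
    exact_mod_cast Nat.cast_le.mpr (Nat.le_pow_clog one_lt_two m)
  have hK2L : (K : ℝ) ≤ 2 * L := by
    have h1 : (2 : ℕ) ^ (K - 1) < m := Nat.pow_pred_clog_lt_self one_lt_two hm
    have h2 : ((2 : ℝ)) ^ (K - 1) < (m : ℝ) := by exact_mod_cast h1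
    have h3 : ((K - 1 : ℕ) : ℝ) < L := by
      have := Real.logb_lt_logb (b := 2) one_lt_two (x := (2:ℝ) ^ (K - 1))
        (by positivity) h2
      rwa [Real.logb_pow, Real.logb_self_eq_one (by norm_num : (1:ℝ) < 2), mul_one] at this
    have h4 : (K : ℝ) = ((K - 1 : ℕ) : ℝ) + 1 := by
      have := Nat.sub_add_cancel hK1
      exact_mod_cast (by omega : K = (K - 1) + 1)
    rw [h4]
    nlinarith
  -- level sets
  set A : ℕ → Finset (Fin m) :=
    fun k => Finset.univ.filter (fun i => M / 2 ^ (k + 1) < |v i| ∧ |v i| ≤ M / 2 ^ k)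
    with hAdef
  set E : ℕ → ℝ := fun k => ∑ i ∈ A k, (v i) ^ 2 with hEdef
  have hEnn : ∀ k, 0 ≤ E k := fun k => Finset.sum_nonneg fun i _ => sq_nonneg _
  -- covering
  have hcover : ∀ i : Fin m, M / 2 ^ K < |v i| → ∃ k < K, i ∈ A k := by
    intro i hi
    have hex : ∃ k, M / 2 ^ (k + 1) < |v i| := by
      refine ⟨K - 1, ?_⟩
      rwa [Nat.sub_add_cancel hK1]
    refine ⟨Nat.find hex, ?_, ?_⟩
    · have : Nat.find hex ≤ K - 1 := Nat.find_min' hex (by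
        rwa [Nat.sub_add_cancel hK1])
      omega
    · rw [hAdef]
      simp only [Finset.mem_filter, Finset.mem_univ, true_and]
      refine ⟨Nat.find_spec hex, ?_⟩
      rcases Nat.eq_zero_or_pos (Nat.find hex) with h0 | hpos
      · rw [h0]; simpa using hMle i
      · have := Nat.find_min hex (Nat.sub_lt hpos one_pos)
        rw [not_lt] at this
        have h' : Nat.find hex - 1 + 1 = Nat.find hex := by omega
        rwa [h'] at this
  -- disjointness
  have hdisj : ∀ a b : ℕ, a < b → Disjoint (A a) (A b) := by
    intro a b hab
    rw [Finset.disjoint_left]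
    intro i hia hib
    rw [hAdef] at hia hib
    simp only [Finset.mem_filter, Finset.mem_univ, true_and] at hia hib
    have h1 : M / 2 ^ b ≤ M / 2 ^ (a + 1) := by
      apply div_le_div_of_nonneg_left hMpos.le (by positivity)
      exact pow_le_pow_right₀ one_le_two hab
    linarith [hia.1, hib.2]
  have hpdisj : (↑(Finset.range K) : Set ℕ).PairwiseDisjoint A := by
    intro a _ b _ hab
    rcases lt_or_gt_of_ne hab with h | h
    · exact hdisj a b h
    · exact (hdisj b a h).symm
  -- energy splitting
  have hsplit : S = (∑ i ∈ Finset.univ.filter (fun i => |v i| ≤ M / 2 ^ K), (v i) ^ 2)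
      + ∑ i ∈ Finset.univ.filter (fun i => ¬ |v i| ≤ M / 2 ^ K), (v i) ^ 2 :=
    (Finset.sum_filter_add_sum_filter_not _ _ _).symm
  have hsmall : (∑ i ∈ Finset.univ.filter (fun i => |v i| ≤ M / 2 ^ K), (v i) ^ 2)
      ≤ m * (M / 2 ^ K) ^ 2 := by
    calc (∑ i ∈ Finset.univ.filter (fun i => |v i| ≤ M / 2 ^ K), (v i) ^ 2)
        ≤ ∑ _i ∈ Finset.univ.filter (fun i => |v i| ≤ M / 2 ^ K), (M / 2 ^ K) ^ 2 := by
          apply Finset.sum_le_sum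
          intro i hi
          have h := (Finset.mem_filter.mp hi).2
          rw [← sq_abs]
          exact pow_le_pow_left₀ (abs_nonneg _) h 2
      _ = (Finset.univ.filter (fun i => |v i| ≤ M / 2 ^ K)).card * (M / 2 ^ K) ^ 2 := by
          rw [Finset.sum_const, nsmul_eq_mul]
      _ ≤ m * (M / 2 ^ K) ^ 2 := by
          apply mul_le_mul_of_nonneg_right _ (by positivity)
          have := Finset.card_filter_le Finset.univ (fun i => |v i| ≤ M / 2 ^ K)
          simp only [Finset.card_univ, Fintype.card_fin] at this
          exact_mod_cast this
  have hbig : (∑ i ∈ Finset.univ.filter (fun i => ¬ |v i| ≤ M / 2 ^ K), (v i) ^ 2)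
      ≤ ∑ k ∈ Finset.range K, E k := by
    have hsub : Finset.univ.filter (fun i => ¬ |v i| ≤ M / 2 ^ K)
        ⊆ (Finset.range K).biUnion A := by
      intro i hi
      have h := (Finset.mem_filter.mp hi).2
      rw [not_le] at h
      obtain ⟨k, hk, hik⟩ := hcover i h
      exact Finset.mem_biUnion.mpr ⟨k, Finset.mem_range.mpr hk, hik⟩
    calc (∑ i ∈ Finset.univ.filter (fun i => ¬ |v i| ≤ M / 2 ^ K), (v i) ^ 2)
        ≤ ∑ i ∈ (Finset.range K).biUnion A, (v i) ^ 2 :=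
          Finset.sum_le_sum_of_subset_of_nonneg hsub (fun _ _ _ => sq_nonneg _)
      _ = ∑ k ∈ Finset.range K, E k := Finset.sum_biUnion hpdisj
  have hsmall2 : (m : ℝ) * (M / 2 ^ K) ^ 2 ≤ S / 2 := by
    have h2K : (0 : ℝ) < 2 ^ K := by positivity
    have hm2 : (2 : ℝ) ≤ m := by exact_mod_cast hm
    have key : (M / 2 ^ K) ^ 2 ≤ S / (2 * m) := by
      rw [div_pow]
      apply div_le_div₀ hSnn hM2S (by positivity)
      calc (2 : ℝ) * m ≤ m * m := by nlinarith
        _ ≤ 2 ^ K * 2 ^ K := by nlinarith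
        _ = (2 ^ K) ^ 2 := (sq (2 ^ K : ℝ)).symm
    calc (m : ℝ) * (M / 2 ^ K) ^ 2 ≤ m * (S / (2 * m)) := by
          apply mul_le_mul_of_nonneg_left key (by positivity)
      _ = S / 2 := by field_simp
  have hsumE : S / 2 ≤ ∑ k ∈ Finset.range K, E k := by linarith
  -- pigeonhole
  have hpig : ∃ k ∈ Finset.range K, S / (2 * K) ≤ E k := by
    apply Finset.exists_le_of_sum_le ⟨0, Finset.mem_range.mpr hK1⟩
    rw [Finset.sum_const, Finset.card_range, nsmul_eq_mul]
    have hKpos : (0 : ℝ) < K := by exact_mod_cast hK1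
    rw [show (K : ℝ) * (S / (2 * K)) = S / 2 by field_simp]
    exact hsumE
  obtain ⟨k, hkK, hEk⟩ := hpig
  refine ⟨A k, ?_, ?_⟩
  · -- comparability
    intro i hi j hj
    rw [hAdef] at hi hj
    simp only [Finset.mem_filter, Finset.mem_univ, true_and] at hi hj
    have h1 : M / 2 ^ k = 2 * (M / 2 ^ (k + 1)) := by
      rw [pow_succ]; field_simp
    calc |v i| ≤ M / 2 ^ k := hi.2
      _ = 2 * (M / 2 ^ (k + 1)) := h1
      _ ≤ 2 * |v j| := by linarith [hj.1]
  · -- norm bound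
    have hrestr : l2 (restr (A k) v) = Real.sqrt (E k) := by
      unfold l2
      congr 1
      rw [hEdef]
      simp only [restr, apply_ite (fun x : ℝ => x ^ 2), ne_eq, OfNat.ofNat_ne_zero,
        not_false_eq_true, zero_pow]
      rw [Finset.sum_ite_mem, Finset.univ_inter]
    rw [hrestr]
    have hstep1 : Real.sqrt (S / (2 * K)) ≤ Real.sqrt (E k) := Real.sqrt_le_sqrt hEk
    have hKpos : (0 : ℝ) < K := by exact_mod_cast hK1
    have hstep2 : l2 v / (2.5 * Real.sqrt L) ≤ Real.sqrt (S / (2 * K)) := by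
      rw [Real.sqrt_div hSnn]
      unfold l2
      rw [← hSdef]
      have hsq : Real.sqrt (2 * K) ≤ 2.5 * Real.sqrt L := by
        have h625 : (2.5 : ℝ) * Real.sqrt L = Real.sqrt (6.25 * L) := by
          rw [Real.sqrt_mul (by norm_num : (0:ℝ) ≤ 6.25)]
          congr 1
          rw [show (6.25 : ℝ) = 2.5 ^ 2 by norm_num, Real.sqrt_sq (by norm_num)]
        rw [h625]
        apply Real.sqrt_le_sqrt
        nlinarith
      have hsqpos : (0 : ℝ) < Real.sqrt (2 * K) := Real.sqrt_pos.mpr (by positivity)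
      exact div_le_div_of_nonneg_left (Real.sqrt_nonneg S) hsqpos hsq
    exact hstep2.trans hstep1
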